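/- Let A be a noetherian commutative ring graded by an abelian group ι, let I be a homogeneous ideal of A, and let I = Q₁ ∩ ⋯ ∩ Q_r and I = Q'₁ ∩ ⋯ ∩ Q'_r be two minimal G-primary decompositions, indexed so that (√Q_i)* = (√Q'_i)* = P_i for each i. Let Ω ⊆ {1, …, r} be downward closed with respect to inclusion of the P_i (i.e., if i ∈ Ω and P_j ⊆ P_i then j ∈ Ω). Then ⋂_{i ∈ Ω} Q_i = ⋂_{i ∈ Ω} Q'_i; that is, the partial intersection over a poset ideal of G-associated G-primes is independent of the chosen minimal G-primary decomposition. -/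

import Mathlib

set_option maxHeartbeats 1000000


/-- A homogeneous ideal `Q` of a graded ring `A` is `G`-primary if `Q ≠ A` and for all
homogeneous ideals `I`, `J` with `I·J ⊆ Q` and `J ⊄ Q`, one has `I ⊆ (√Q)*`. -/
def Ideal.IsGPrimary {ι : Type*} [AddCommGroup ι] [DecidableEq ι] {A : Type*} [CommRing A]
    (𝒜 : ι → AddSubgroup A) [GradedRing 𝒜] (Q : Ideal A) : Prop :=
  Q ≠ ⊤ ∧ ∀ I J : Ideal A, I.IsHomogeneous 𝒜 → J.IsHomogeneous 𝒜 →
    I * J ≤ Q → ¬ J ≤ Q → I ≤ (Q.radical.homogeneousCore 𝒜).toIdeal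

/-- A minimal `G`-primary decomposition of a homogeneous ideal `I`: each `Q i` is a
`G`-primary homogeneous ideal, `I = ⋂ i, Q i`, the `G`-radicals `(√(Q i))*` are pairwise
distinct, and no component is redundant. -/
def IsMinimalGPrimaryDecomposition {ι : Type*} [AddCommGroup ι] [DecidableEq ι]
    {A : Type*} [CommRing A] (𝒜 : ι → AddSubgroup A) [GradedRing 𝒜]
    {κ : Type*} [Fintype κ] (I : Ideal A) (Q : κ → Ideal A) : Prop :=
  (∀ i, (Q i).IsHomogeneous 𝒜 ∧ (Q i).IsGPrimary 𝒜) ∧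
  I = ⨅ i, Q i ∧
  (∀ i j, ((Q i).radical.homogeneousCore 𝒜).toIdeal
      = ((Q j).radical.homogeneousCore 𝒜).toIdeal → i = j) ∧
  (∀ i, ¬ (⨅ j, ⨅ (_ : j ≠ i), Q j) ≤ Q i)

section Aux

variable {ι : Type*} [AddCommGroup ι] [DecidableEq ι] {A : Type*} [CommRing A]
  (𝒜 : ι → AddSubgroup A) [GradedRing 𝒜]

open DirectSum

/-- Galois coinsertion characterization of the homogeneous core. -/
lemma GPrimaryAux.le_core_iff {J I : Ideal A} (hJ : J.IsHomogeneous 𝒜) :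
    J ≤ (I.homogeneousCore 𝒜).toIdeal ↔ J ≤ I := by
  constructor
  · intro h; exact h.trans (I.toIdeal_homogeneousCore_le 𝒜)
  · intro h
    exact (Ideal.homogeneousCore.gc 𝒜 ⟨J, hJ⟩ I).mp h

/-- The colon of homogeneous ideals is homogeneous. -/
lemma GPrimaryAux.isHomogeneous_colon {I K : Ideal A} (hI : I.IsHomogeneous 𝒜)
    (hK : K.IsHomogeneous 𝒜) : (Submodule.colon I K).IsHomogeneous 𝒜 := by
  intro n r hr
  rw [Submodule.mem_colon] at hr ⊢
  obtain ⟨S, rfl⟩ := (Ideal.IsHomogeneous.iff_exists 𝒜 K).mp hK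
  intro p hp
  have : Ideal.span ((↑) '' S) ≤ Submodule.comap
      (LinearMap.mulLeft A ((decompose 𝒜 r n : 𝒜 n) : A)) I := by
    rw [Ideal.span_le]
    rintro _ ⟨⟨s, d, hs⟩, hsS, rfl⟩
    have hrs : r * s ∈ I := by
      simpa [smul_eq_mul] using hr s (Ideal.subset_span ⟨⟨s, d, hs⟩, hsS, rfl⟩)
    have := hI (n + d) hrs
    rw [DirectSum.coe_decompose_mul_add_of_right_mem 𝒜 hs] at this
    simpa using this
  simpa [smul_eq_mul] using this hp

lemma GPrimaryAux.isHomogeneous_pow {I : Ideal A} (hI : I.IsHomogeneous 𝒜) (n : ℕ) :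
    (I ^ n).IsHomogeneous 𝒜 := by
  induction n with
  | zero => simpa using Ideal.IsHomogeneous.top 𝒜
  | succ n ih => rw [pow_succ]; exact ih.mul hI

/-- The `G`-radical of a `G`-primary ideal is `G`-prime. -/
lemma GPrimaryAux.gprime [IsNoetherianRing A] {Q : Ideal A} (hQp : Q.IsGPrimary 𝒜)
    {X Y : Ideal A} (hX : X.IsHomogeneous 𝒜) (hY : Y.IsHomogeneous 𝒜)
    (hXY : X * Y ≤ (Q.radical.homogeneousCore 𝒜).toIdeal) :
    X ≤ (Q.radical.homogeneousCore 𝒜).toIdeal ∨ Y ≤ (Q.radical.homogeneousCore 𝒜).toIdeal := by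
  by_cases hY' : Y ≤ (Q.radical.homogeneousCore 𝒜).toIdeal
  · exact Or.inr hY'
  left
  obtain ⟨n, hn⟩ := Ideal.exists_radical_pow_le_of_fg Q (IsNoetherian.noetherian _)
  have hcore : (Q.radical.homogeneousCore 𝒜).toIdeal ≤ Q.radical :=
    Q.radical.toIdeal_homogeneousCore_le 𝒜
  have hXYn : X ^ n * Y ^ n ≤ Q := by
    rw [← mul_pow]
    calc (X * Y) ^ n ≤ Q.radical ^ n := Ideal.pow_right_mono (hXY.trans hcore) n
    _ ≤ Q := hn
  have hYn : ¬ Y ^ n ≤ Q := by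
    intro h
    apply hY'
    rw [GPrimaryAux.le_core_iff 𝒜 hY]
    intro y hy
    exact ⟨n, h (Ideal.pow_mem_pow hy n)⟩
  have hXn := hQp.2 (X ^ n) (Y ^ n) (GPrimaryAux.isHomogeneous_pow 𝒜 hX n)
    (GPrimaryAux.isHomogeneous_pow 𝒜 hY n) hXYn hYn
  rw [GPrimaryAux.le_core_iff 𝒜 hX]
  intro x hx
  have : x ^ n ∈ Q.radical := hcore (hXn (Ideal.pow_mem_pow hx n))
  exact Q.radical_idem ▸ ⟨n, this⟩

/-- Intrinsic characterization of the partial intersection over a downward-closed set. -/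
lemma GPrimaryAux.mem_partial_inter_iff [IsNoetherianRing A] {r : ℕ} {I : Ideal A}
    {Q P : Fin r → Ideal A} (hQ : IsMinimalGPrimaryDecomposition 𝒜 I Q)
    (hPQ : ∀ i, ((Q i).radical.homogeneousCore 𝒜).toIdeal = P i)
    {Ω : Set (Fin r)} (hΩ : ∀ i ∈ Ω, ∀ j, P j ≤ P i → j ∈ Ω) {x : A} :
    x ∈ ⨅ i ∈ Ω, Q i ↔
      ∃ K : Ideal A, K.IsHomogeneous 𝒜 ∧ (∀ i ∈ Ω, ¬ K ≤ P i) ∧ ∀ k ∈ K, k * x ∈ I := by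
  classical
  obtain ⟨hQprim, hQeq, -, -⟩ := hQ
  have hQhom : ∀ i, (Q i).IsHomogeneous 𝒜 := fun i => (hQprim i).1
  have hQleP : ∀ i, Q i ≤ P i := fun i => by
    rw [← hPQ i, GPrimaryAux.le_core_iff 𝒜 (hQhom i)]
    exact Ideal.le_radical
  constructor
  · intro hx
    simp only [Ideal.mem_iInf] at hx
    refine ⟨∏ j ∈ Finset.univ.filter (fun j => j ∉ Ω), Q j, ?_, ?_, ?_⟩
    · exact Finset.prod_induction _ _ (fun a b ha hb => ha.mul hb)
        (by simpa using Ideal.IsHomogeneous.top 𝒜) (fun j _ => hQhom j)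
    · intro i hi hle
      -- some factor must be contained in P i
      have key : ∀ s : Finset (Fin r), (∏ j ∈ s, Q j) ≤ P i → ∃ j ∈ s, Q j ≤ P i := by
        intro s
        induction s using Finset.induction_on with
        | empty =>
          intro h
          simp only [Finset.prod_empty] at h
          exfalso
          have htop : P i = ⊤ := top_le_iff.mp (by simpa using h)
          have hrt : (Q i).radical = ⊤ := by
            rw [← top_le_iff, ← htop, ← hPQ i]
            exact (Q i).radical.toIdeal_homogeneousCore_le 𝒜
          exact (hQprim i).2.1 (Ideal.radical_eq_top.mp hrt)
        | insert _ _ hj ih =>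
          rename_i a s'
          intro h
          rw [Finset.prod_insert hj, ← hPQ i] at h
          rcases GPrimaryAux.gprime 𝒜 (hQprim i).2 (hQhom a)
              (Finset.prod_induction _ _ (fun a b ha hb => ha.mul hb)
                (by simpa using Ideal.IsHomogeneous.top 𝒜) (fun j _ => hQhom j)) h with h1 | h2
          · rw [hPQ i] at h1
            exact ⟨a, Finset.mem_insert_self a s', h1⟩
          · rw [hPQ i] at h2
            obtain ⟨j, hjs, hjle⟩ := ih h2
            exact ⟨j, Finset.mem_insert_of_mem hjs, hjle⟩
      obtain ⟨j, hjs, hjle⟩ := key _ hle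
      rw [Finset.mem_filter] at hjs
      apply hjs.2
      refine hΩ i hi j ?_
      -- P j ≤ P i
      rw [← hPQ j, ← hPQ i, GPrimaryAux.le_core_iff 𝒜 (Ideal.homogeneousCore 𝒜 _).isHomogeneous]
      calc ((Q j).radical.homogeneousCore 𝒜).toIdeal ≤ (Q j).radical :=
            (Q j).radical.toIdeal_homogeneousCore_le 𝒜
        _ ≤ (P i).radical := Ideal.radical_mono hjle
        _ ≤ (Q i).radical := by
            rw [← (Q i).radical_idem]
            exact Ideal.radical_mono (hPQ i ▸ (Q i).radical.toIdeal_homogeneousCore_le 𝒜)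
    · intro k hk
      rw [hQeq, Ideal.mem_iInf]
      intro j
      by_cases hj : j ∈ Ω
      · exact Ideal.mul_mem_left _ k (hx j hj)
      · have : k ∈ Q j := by
          refine Ideal.prod_le_inf.trans (Finset.inf_le ?_) hk
          simp [hj]
        exact Ideal.mul_mem_right x _ this
  · rintro ⟨K, hKhom, hKP, hKI⟩
    simp only [Ideal.mem_iInf]
    intro i hi
    set J : Ideal A := Submodule.colon I K with hJdef
    have hJhom : J.IsHomogeneous 𝒜 := GPrimaryAux.isHomogeneous_colon 𝒜 (hQeq ▸
      Ideal.IsHomogeneous.iInf (fun j => hQhom j)) hKhom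
    have hxJ : x ∈ J := by
      rw [hJdef, Submodule.mem_colon]
      intro p hp
      rw [smul_eq_mul, mul_comm]
      exact hKI p hp
    have hKJ : K * J ≤ Q i := by
      rw [Ideal.mul_le]
      intro a ha b hb
      have : b * a ∈ I := by
        rw [hJdef, Submodule.mem_colon] at hb
        simpa [smul_eq_mul] using hb a ha
      rw [mul_comm]
      rw [hQeq, Ideal.mem_iInf] at this
      exact this i
    by_cases hJQ : J ≤ Q i
    · exact hJQ hxJ
    · refine absurd ?_ (hKP i hi)
      rw [← hPQ i]
      exact (hQprim i).2.2 K J hKhom hJhom hKJ hJQ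

end Aux

theorem gPrimary_decomposition_partial_inter_unique {ι : Type*} [AddCommGroup ι]
    [DecidableEq ι] {A : Type*} [CommRing A] [IsNoetherianRing A]
    (𝒜 : ι → AddSubgroup A) [GradedRing 𝒜] {r : ℕ} (I : Ideal A) (hI : I.IsHomogeneous 𝒜)
    (Q Q' : Fin r → Ideal A) (P : Fin r → Ideal A)
    (hQ : IsMinimalGPrimaryDecomposition 𝒜 I Q)
    (hQ' : IsMinimalGPrimaryDecomposition 𝒜 I Q')
    (hPQ : ∀ i, ((Q i).radical.homogeneousCore 𝒜).toIdeal = P i)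
    (hPQ' : ∀ i, ((Q' i).radical.homogeneousCore 𝒜).toIdeal = P i)
    (Ω : Set (Fin r)) (hΩ : ∀ i ∈ Ω, ∀ j, P j ≤ P i → j ∈ Ω) :
    ⨅ i ∈ Ω, Q i = ⨅ i ∈ Ω, Q' i := by
  ext x
  rw [GPrimaryAux.mem_partial_inter_iff 𝒜 hQ hPQ hΩ,
    GPrimaryAux.mem_partial_inter_iff 𝒜 hQ' hPQ' hΩ]
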